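/- Matching condition II: let (V*, W*) be a saddle point with φ(V*,W*) = max_{W ∈ 𝒲₁(E)} min_{V ∈ 𝒱(E,D)} φ(V,W), and let V̂ := argmin_{V ∈ 𝒱(W*,D)} φ(V,W*). If the support of V̂ is contained in the set 𝒰̄ of constant functions, then R_m(D|E) = φ(V*,W*) = max_{W ∈ 𝒲₁(E)} min_{V ∈ 𝒱(E,D)} φ(V,W). -/
import Mathlib


open scoped BigOperators

noncomputable section

namespace UWZ

/-- real-valued indicator of a proposition. -/
def ind (p : Prop) : ℝ := @ite ℝ p (Classical.propDecidable p) 1 0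

/-- `P` is a probability distribution on the finite type `A`. -/
def IsDist {A : Type*} [Fintype A] (P : A → ℝ) : Prop :=
  (∀ a, 0 ≤ P a) ∧ ∑ a, P a = 1

/-- `W` is a channel from `A` to `B`. -/
def IsChannel {A B : Type*} [Fintype A] [Fintype B] (W : A → B → ℝ) : Prop :=
  ∀ a, IsDist (W a)

/-- the `n`-fold i.i.d. extension of `P`. -/
def iid {A : Type*} (P : A → ℝ) (n : ℕ) (xs : Fin n → A) : ℝ := ∏ t, P (xs t)

/-- the memoryless (`n`-fold i.i.d.) extension of a channel. -/
def memoryless {A B : Type*} (W : A → B → ℝ) (n : ℕ)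
    (xs : Fin n → A) (ys : Fin n → B) : ℝ :=
  ∏ t, W (xs t) (ys t)

/-- the additive (per-letter, normalized) extension of a distortion measure. -/
def dseq {A B : Type*} (d : A → B → ℝ) (n : ℕ) (xs : Fin n → A) (ys : Fin n → B) : ℝ :=
  (∑ t, d (xs t) (ys t)) / n

/-- Shannon entropy (in bits). -/
def ent {A : Type*} [Fintype A] (P : A → ℝ) : ℝ := -∑ a, P a * Real.logb 2 (P a)

/-- mutual information of a joint distribution on `A × B` (in bits). -/
def mutInf {A B : Type*} [Fintype A] [Fintype B] (J : A × B → ℝ) : ℝ :=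
  ent (fun a => ∑ b, J (a, b)) + ent (fun b => ∑ a, J (a, b)) - ent J

section WZ

variable {X Y Xh : Type*} [Fintype X] [Fintype Y] [Fintype Xh] [DecidableEq Y]

/-- expected per-letter side-information distortion `e(P,W)` of channel `W`. -/
def eDist (P : X → ℝ) (e : X → Y → ℝ) (W : X → Y → ℝ) : ℝ :=
  ∑ x, ∑ y, P x * W x y * e x y

/-- the class `𝒲₁(E)` of single-letter channels. -/
def W1 (P : X → ℝ) (e : X → Y → ℝ) (E : ℝ) : Set (X → Y → ℝ) :=
  {W | IsChannel W ∧ eDist P e W ≤ E}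

/-- `d(V,W)`: expected reproduction distortion for a test channel `V` whose output
alphabet `𝒰` is the set of functions from `Y` to `Xh`. -/
def dVW (P : X → ℝ) (d : X → Xh → ℝ) (V : X → (Y → Xh) → ℝ) (W : X → Y → ℝ) : ℝ :=
  ∑ u : Y → Xh, ∑ x, ∑ y, P x * V x u * W x y * d x (u y)

/-- `φ(V,W) = I(U;X) − I(U;Y)` under the joint law `P_X(x)V(u|x)W(y|x)`. -/
def phi (P : X → ℝ) (V : X → (Y → Xh) → ℝ) (W : X → Y → ℝ) : ℝ :=
  mutInf (fun p : (Y → Xh) × X => P p.2 * V p.2 p.1) -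
    mutInf (fun p : (Y → Xh) × Y => ∑ x, P x * V x p.1 * W x p.2)

/-- `𝒱(W,D)`. -/
def Vset (P : X → ℝ) (d : X → Xh → ℝ) (W : X → Y → ℝ) (D : ℝ) :
    Set (X → (Y → Xh) → ℝ) :=
  {V | IsChannel V ∧ dVW P d V W ≤ D}

/-- `𝒱(E,D)`. -/
def Vrob (P : X → ℝ) (e : X → Y → ℝ) (d : X → Xh → ℝ) (E D : ℝ) :
    Set (X → (Y → Xh) → ℝ) :=
  {V | IsChannel V ∧ ∀ W ∈ W1 P e E, dVW P d V W ≤ D}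

/-- the Wyner–Ziv rate-distortion function `R_WZ(D|W)`. -/
def RWZ (P : X → ℝ) (d : X → Xh → ℝ) (D : ℝ) (W : X → Y → ℝ) : ℝ :=
  sInf ((fun V => phi P V W) '' Vset P d W D)

/-- the pseudo rate-distortion function `R̃_WZ(D|W,E)`. -/
def RWZt (P : X → ℝ) (e : X → Y → ℝ) (d : X → Xh → ℝ) (D E : ℝ) (W : X → Y → ℝ) : ℝ :=
  sInf ((fun V => phi P V W) '' Vrob P e d E D)

end WZ

/-- a (possibly stochastic) Wyner–Ziv code of blocklength `n`:
a stochastic encoder `enc : 𝒳ⁿ → ℳ` and a decoder `dec : ℳ × 𝒴ⁿ → 𝒳̂ⁿ`. -/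
structure Code (X Y Xh : Type*) [Fintype X] (n : ℕ) where
  M : ℕ
  Mpos : 0 < M
  enc : (Fin n → X) → Fin M → ℝ
  enc_channel : IsChannel enc
  dec : Fin M → (Fin n → Y) → Fin n → Xh

section Codes

variable {X Y Xh : Type*} [Fintype X] [Fintype Y] [Fintype Xh]

/-- expected reproduction distortion of a code over the channel `Wn`. -/
def Code.expDist {n : ℕ} (C : Code X Y Xh n) (P : X → ℝ) (d : X → Xh → ℝ)
    (Wn : (Fin n → X) → (Fin n → Y) → ℝ) : ℝ :=
  ∑ xs, ∑ ys, ∑ m, iid P n xs * Wn xs ys * C.enc xs m * dseq d n xs (C.dec m ys)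

/-- probability that the reproduction distortion of a code exceeds `D`, over channel `Wn`. -/
def Code.excessProb {n : ℕ} (C : Code X Y Xh n) (P : X → ℝ) (d : X → Xh → ℝ)
    (Wn : (Fin n → X) → (Fin n → Y) → ℝ) (D : ℝ) : ℝ :=
  ∑ xs, ∑ ys, ∑ m, iid P n xs * Wn xs ys * C.enc xs m * ind (D < dseq d n xs (C.dec m ys))

/-- a sequence of channels from `X`-sequences to `Y`-sequences. -/
abbrev ChannelSeq (X Y : Type*) := ∀ n : ℕ, (Fin n → X) → (Fin n → Y) → ℝ

/-- probability that the side-information distortion exceeds `E`. -/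
def excessSideProb (P : X → ℝ) (e : X → Y → ℝ) {n : ℕ}
    (Wn : (Fin n → X) → (Fin n → Y) → ℝ) (E : ℝ) : ℝ :=
  ∑ xs, ∑ ys, iid P n xs * Wn xs ys * ind (E < dseq e n xs ys)

/-- expected side-information distortion at blocklength `n`. -/
def avgSideDist (P : X → ℝ) (e : X → Y → ℝ) {n : ℕ}
    (Wn : (Fin n → X) → (Fin n → Y) → ℝ) : ℝ :=
  ∑ xs, ∑ ys, iid P n xs * Wn xs ys * dseq e n xs ys

/-- the maximum distortion constrained class `𝒲_m(E)`. -/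
def MaxClass (P : X → ℝ) (e : X → Y → ℝ) (E : ℝ) : Set (ChannelSeq X Y) :=
  {Wseq | (∀ n, IsChannel (Wseq n)) ∧
    ∀ δ > (0:ℝ), ∃ n0 : ℕ, ∀ n ≥ n0, excessSideProb P e (Wseq n) E ≤ δ}

/-- the average distortion constrained class `𝒲_a(E)`. -/
def AvgClass (P : X → ℝ) (e : X → Y → ℝ) (E : ℝ) : Set (ChannelSeq X Y) :=
  {Wseq | (∀ n, IsChannel (Wseq n)) ∧ ∀ n, 1 ≤ n → avgSideDist P e (Wseq n) ≤ E}

/-- `R` is an achievable rate at distortion level `D`, universally for the class `WC`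
of channel sequences. -/
def Achievable (P : X → ℝ) (d : X → Xh → ℝ) (WC : Set (ChannelSeq X Y)) (D R : ℝ) : Prop :=
  ∀ ε > (0:ℝ), ∃ n0 : ℕ, ∃ C : ∀ n, Code X Y Xh n, ∀ n ≥ n0,
    Real.logb 2 ((C n).M : ℝ) / (n : ℝ) ≤ R + ε ∧
    ∀ Wseq ∈ WC, (C n).expDist P d (Wseq n) ≤ D + ε

/-- the rate-distortion function `R_m(D|E)` of the maximum distortion constrained class. -/
def Rm (P : X → ℝ) (e : X → Y → ℝ) (d : X → Xh → ℝ) (D E : ℝ) : ℝ :=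
  sInf {R | Achievable P d (MaxClass P e E) D R}

/-- the rate-distortion function `R_a(D|E)` of the average distortion constrained class. -/
def Ra (P : X → ℝ) (e : X → Y → ℝ) (d : X → Xh → ℝ) (D E : ℝ) : ℝ :=
  sInf {R | Achievable P d (AvgClass P e E) D R}

end Codes

/-- a Heegard–Berger code: one encoder and two decoders. -/
structure HBCode (X Y Xh : Type*) (n : ℕ) where
  M : ℕ
  Mpos : 0 < M
  enc : (Fin n → X) → Fin M
  dec1 : Fin M → (Fin n → Y) → Fin n → Xh
  dec2 : Fin M → (Fin n → Y) → Fin n → Xh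

section HB

variable {X Y Xh : Type*} [Fintype X] [Fintype Y] [Fintype Xh]

/-- expected distortion of one branch of a Heegard–Berger code over the memoryless
extension of the single-letter channel `W`. -/
def hbExpDist {n M : ℕ} (P : X → ℝ) (d : X → Xh → ℝ) (W : X → Y → ℝ)
    (enc : (Fin n → X) → Fin M) (dec : Fin M → (Fin n → Y) → Fin n → Xh) : ℝ :=
  ∑ xs, ∑ ys, iid P n xs * memoryless W n xs ys * dseq d n xs (dec (enc xs) ys)

/-- achievability for the Heegard–Berger problem with side-information channels `W₁, W₂`. -/
def HBAchievable (P : X → ℝ) (d : X → Xh → ℝ) (W₁ W₂ : X → Y → ℝ) (D₁ D₂ R : ℝ) : Prop :=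
  ∀ ε > (0:ℝ), ∃ n0 : ℕ, ∃ C : ∀ n, HBCode X Y Xh n, ∀ n ≥ n0,
    Real.logb 2 ((C n).M : ℝ) / (n : ℝ) ≤ R + ε ∧
    hbExpDist P d W₁ (C n).enc (C n).dec1 ≤ D₁ + ε ∧
    hbExpDist P d W₂ (C n).enc (C n).dec2 ≤ D₂ + ε

/-- the Heegard–Berger rate-distortion function `R_HB(D₁,D₂|W₁,W₂)`. -/
def RHB (P : X → ℝ) (d : X → Xh → ℝ) (W₁ W₂ : X → Y → ℝ) (D₁ D₂ : ℝ) : ℝ :=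
  sInf {R | HBAchievable P d W₁ W₂ D₁ D₂ R}

end HB

/-- the classical (no side-information) rate-distortion function `R(D)`. -/
def RD {X Xh : Type*} [Fintype X] [Fintype Xh] (P : X → ℝ) (d : X → Xh → ℝ) (D : ℝ) : ℝ :=
  sInf ((fun Q : X → Xh → ℝ => mutInf fun p : X × Xh => P p.1 * Q p.1 p.2) ''
    {Q | IsChannel Q ∧ (∑ x, ∑ xh, P x * Q x xh * d x xh) ≤ D})

section Types

variable {X Y : Type*} [Fintype X] [Fintype Y] [DecidableEq X] [DecidableEq Y]

/-- the empirical distribution (type) `P_{x^n}` of a sequence. -/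
def empDist {n : ℕ} (xs : Fin n → X) (a : X) : ℝ :=
  ((Finset.univ.filter fun t => xs t = a).card : ℝ) / n

/-- the joint empirical distribution (joint type) of a pair of sequences. -/
def empJoint {n : ℕ} (xs : Fin n → X) (ys : Fin n → Y) (p : X × Y) : ℝ :=
  ((Finset.univ.filter fun t => xs t = p.1 ∧ ys t = p.2).card : ℝ) / n

/-- `x^n` is `P`-typical with constant `δ`. -/
def isTypical {n : ℕ} (P : X → ℝ) (δ : ℝ) (xs : Fin n → X) : Prop :=
  (∀ a, |empDist xs a - P a| ≤ δ) ∧ ∀ t, P (xs t) ≠ 0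

/-- `y^n` lies in the `W`-shell `T_W(x^n)` of `x^n`. -/
def inShell {n : ℕ} (xs : Fin n → X) (ys : Fin n → Y) (W : X → Y → ℝ) : Prop :=
  ∀ a b, empJoint xs ys (a, b) = empDist xs a * W a b

/-- cardinality of the `W`-shell of `x^n`. -/
def shellCard {n : ℕ} (xs : Fin n → X) (W : X → Y → ℝ) : ℕ :=
  Set.ncard {ys : Fin n → Y | inShell xs ys W}

end Types

/-- `W` is a conditional type with denominator `n` (all entries are multiples of `1/n`). -/
def isCondType {X Y : Type*} (n : ℕ) (W : X → Y → ℝ) : Prop :=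
  ∀ x y, ∃ k : ℕ, W x y = (k : ℝ) / n

section Perm

variable {X Y Xh : Type*} [Fintype X] [Fintype Y] [Fintype Xh]

/-- probability, under the permuted source/side-information pair, that the reproduction
distortion of the code `C` exceeds `D`. -/
def permExcess {n : ℕ} (Pxy : (Fin n → X) × (Fin n → Y) → ℝ) (C : Code X Y Xh n)
    (d : X → Xh → ℝ) (D : ℝ) (π : Equiv.Perm (Fin n)) : ℝ :=
  ∑ p : (Fin n → X) × (Fin n → Y), ∑ m,
    Pxy p * C.enc (p.1 ∘ π) m * ind (D < dseq d n (p.1 ∘ π) (C.dec m (p.2 ∘ π)))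

end Perm

/-- **matching condition II.** Let `(V*, W*)` be a saddle point of `φ` over
`𝒱(E,D) × 𝒲₁(E)` with `φ(V*,W*) = max_{W ∈ 𝒲₁(E)} min_{V ∈ 𝒱(E,D)} φ(V,W)`, and let `V̂` be
the minimizer of `φ(·,W*)` over `𝒱(W*,D)`.  If the support of `V̂` consists only of constant
functions, then `R_m(D|E) = φ(V*,W*) = max_{W ∈ 𝒲₁(E)} min_{V ∈ 𝒱(E,D)} φ(V,W)`.
(The two bounds of the paper's Theorem 1 are taken as hypotheses.) -/
theorem matching_condition_II
    {X Y Xh : Type*} [Fintype X] [Fintype Y] [Fintype Xh] [DecidableEq Y]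
    [Nonempty X] [Nonempty Y] [Nonempty Xh]
    (P : X → ℝ) (hP : IsDist P)
    (e : X → Y → ℝ) (he0 : ∀ x y, 0 ≤ e x y) (heZ : ∀ x, ∃ y, e x y = 0)
    (d : X → Xh → ℝ) (hd0 : ∀ x xh, 0 ≤ d x xh) (hdZ : ∀ x, ∃ xh, d x xh = 0)
    (D E : ℝ) (hD : 0 ≤ D) (hE : 0 ≤ E)
    -- the converse bound of Theorem 1
    (hlow : sSup ((fun W => RWZ P d D W) '' W1 P e E) ≤ Rm P e d D E)
    -- the direct bound of Theorem 1
    (hup : Rm P e d D E ≤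
      sSup ((fun W => sInf ((fun V => phi P V W) '' Vrob P e d E D)) '' W1 P e E))
    -- the saddle point (V*, W*)
    (Vstar : X → (Y → Xh) → ℝ) (Wstar : X → Y → ℝ)
    (hVstar : Vstar ∈ Vrob P e d E D) (hWstar : Wstar ∈ W1 P e E)
    (hsaddle1 : ∀ V ∈ Vrob P e d E D, phi P Vstar Wstar ≤ phi P V Wstar)
    (hsaddle2 : ∀ W ∈ W1 P e E, phi P Vstar W ≤ phi P Vstar Wstar)
    (hsaddleVal : phi P Vstar Wstar =
      sSup ((fun W => sInf ((fun V => phi P V W) '' Vrob P e d E D)) '' W1 P e E))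
    -- V̂, the minimizer of φ(·,W*) over 𝒱(W*,D)
    (Vhat : X → (Y → Xh) → ℝ) (hVhat : Vhat ∈ Vset P d Wstar D)
    (hVhatMin : ∀ V ∈ Vset P d Wstar D, phi P Vhat Wstar ≤ phi P V Wstar)
    -- the support of V̂ consists only of constant functions: supp(V̂) ⊆ 𝒰̄
    (hsupp : ∀ x, ∀ u : Y → Xh, Vhat x u ≠ 0 → ∃ c : Xh, ∀ y, u y = c) :
    Rm P e d D E = phi P Vstar Wstar ∧
    phi P Vstar Wstar =
      sSup ((fun W => sInf ((fun V => phi P V W) '' Vrob P e d E D)) '' W1 P e E) := by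
  -- Step 1: dVW of Vhat does not depend on the channel, since its support is constant fns.
  have hdVW_const : ∀ W : X → Y → ℝ, IsChannel W →
      dVW P d Vhat W = dVW P d Vhat Wstar := by
    intro W hW
    unfold dVW
    refine Finset.sum_congr rfl fun u _ => Finset.sum_congr rfl fun x _ => ?_
    by_cases h : Vhat x u = 0
    · simp [h]
    · obtain ⟨c, hc⟩ := hsupp x u h
      have key : ∀ (W' : X → Y → ℝ), IsChannel W' →
          ∑ y, P x * Vhat x u * W' x y * d x (u y) = P x * Vhat x u * d x c := by
        intro W' hW'
        have : ∀ y, P x * Vhat x u * W' x y * d x (u y)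
            = (P x * Vhat x u * d x c) * W' x y := by
          intro y; rw [hc y]; ring
        rw [Finset.sum_congr rfl fun y _ => this y, ← Finset.mul_sum, (hW' x).2, mul_one]
      rw [key W hW, key Wstar (hWstar.1)]
  -- Step 2: Vhat ∈ Vrob.
  have hVhatRob : Vhat ∈ Vrob P e d E D := by
    refine ⟨hVhat.1, fun W hW => ?_⟩
    rw [hdVW_const W hW.1]
    exact hVhat.2
  -- Step 3: phi(Vstar,Wstar) is a lower bound and a member of the RWZ image set at Wstar.
  have hlb : ∀ r ∈ (fun V => phi P V Wstar) '' Vset P d Wstar D,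
      phi P Vstar Wstar ≤ r := by
    rintro r ⟨V, hV, rfl⟩
    exact (hsaddle1 Vhat hVhatRob).trans (hVhatMin V hV)
  have hVstarMem : Vstar ∈ Vset P d Wstar D := ⟨hVstar.1, hVstar.2 Wstar hWstar⟩
  have hmem : phi P Vstar Wstar ∈ (fun V => phi P V Wstar) '' Vset P d Wstar D :=
    ⟨Vstar, hVstarMem, rfl⟩
  have hRWZstar : RWZ P d D Wstar = phi P Vstar Wstar := by
    refine le_antisymm (csInf_le ⟨phi P Vstar Wstar, hlb⟩ hmem)
      (le_csInf ⟨_, hmem⟩ hlb)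
  -- Step 4: the RWZ image is bounded above by max (phi*) 0.
  have hbdd : ∀ r ∈ (fun W => RWZ P d D W) '' W1 P e E,
      r ≤ max (phi P Vstar Wstar) 0 := by
    rintro r ⟨W, hW, rfl⟩
    by_cases hb2 : BddBelow ((fun V => phi P V W) '' Vset P d W D)
    · have hVstarW : Vstar ∈ Vset P d W D := ⟨hVstar.1, hVstar.2 W hW⟩
      have : RWZ P d D W ≤ phi P Vstar W :=
        csInf_le hb2 ⟨Vstar, hVstarW, rfl⟩
      exact le_max_of_le_left (this.trans (hsaddle2 W hW))
    · have : RWZ P d D W = 0 := Real.sInf_of_not_bddBelow hb2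
      show RWZ P d D W ≤ _
      rw [this]; exact le_max_right _ _
  -- Step 5: conclude.
  have hsup_le : phi P Vstar Wstar ≤ sSup ((fun W => RWZ P d D W) '' W1 P e E) := by
    have : RWZ P d D Wstar ∈ (fun W => RWZ P d D W) '' W1 P e E :=
      ⟨Wstar, hWstar, rfl⟩
    rw [← hRWZstar]
    exact le_csSup ⟨max (phi P Vstar Wstar) 0, hbdd⟩ this
  have h1 : phi P Vstar Wstar ≤ Rm P e d D E := hsup_le.trans hlow
  have h2 : Rm P e d D E ≤ phi P Vstar Wstar := by
    rw [hsaddleVal]; exact hup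
  exact ⟨le_antisymm h2 h1, hsaddleVal⟩

end UWZ
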